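/- If a, b lie in the same shell Sᵢ with ‖a‖ ≥ ‖b‖ and ‖a‖ − ‖b‖ ≥ ‖a−b‖/5, then with φ as in the gluing construction, ‖φ(a) − φ(b)‖ ≥ ‖a‖ − ‖b‖ ≥ ‖a−b‖/5. -/
import Mathlib


/-- Same-shell case of the gluing map: if `a, b ∈ Sᵢ` with `‖a‖ ≥ ‖b‖` and
`‖a‖ − ‖b‖ ≥ ‖a−b‖/5`, then `‖φ(a) − φ(b)‖ ≥ ‖a‖ − ‖b‖ ≥ ‖a−b‖/5`. -/
theorem gluing_same_shell_lower_bound {Z Y : Type*}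
    [NormedAddCommGroup Z] [NormedSpace ℝ Z] [CompleteSpace Z]
    [NormedAddCommGroup Y] [NormedSpace ℝ Y] [CompleteSpace Y]
    (A : Set Z) (hA : ∀ r : ℝ, (A ∩ Metric.closedBall 0 r).Finite)
    (Zsub : ℤ → Submodule ℝ Z)
    (hZsub : ∀ i : ℤ, Zsub i = Submodule.span ℝ {a : Z | a ∈ A ∧ ‖a‖ ≤ (2:ℝ) ^ i})
    (Ysub : ℤ → Submodule ℝ Y)
    (hmono : ∀ y : ℤ → Y, (∀ i, y i ∈ Ysub i) → Summable y →
      ∀ j : ℤ, ‖y j‖ ≤ ‖∑' i, y i‖)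
    (E : ∀ i : ℤ, (Zsub i) →ₗ[ℝ] Y)
    (hEiso : ∀ (i : ℤ) (z : Zsub i), ‖E i z‖ = ‖(z : Z)‖)
    (hErange : ∀ (i : ℤ) (z : Zsub i), E i z ∈ Ysub i)
    (φ : Z → Y) (a b : Z) (haA : a ∈ A) (hbA : b ∈ A) (i : ℤ)
    (ha1 : (2:ℝ) ^ (i - 1) ≤ ‖a‖) (ha2 : ‖a‖ ≤ (2:ℝ) ^ i)
    (hb1 : (2:ℝ) ^ (i - 1) ≤ ‖b‖) (hb2 : ‖b‖ ≤ (2:ℝ) ^ i)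
    (hba : ‖b‖ ≤ ‖a‖) (hfar : ‖a - b‖ / 5 ≤ ‖a‖ - ‖b‖)
    (haZ : a ∈ Zsub i) (haZ' : a ∈ Zsub (i + 1))
    (hbZ : b ∈ Zsub i) (hbZ' : b ∈ Zsub (i + 1))
    (hφa : φ a = (((2:ℝ) ^ i - ‖a‖) / (2:ℝ) ^ (i - 1)) • E i ⟨a, haZ⟩
        + ((‖a‖ - (2:ℝ) ^ (i - 1)) / (2:ℝ) ^ (i - 1)) • E (i + 1) ⟨a, haZ'⟩)
    (hφb : φ b = (((2:ℝ) ^ i - ‖b‖) / (2:ℝ) ^ (i - 1)) • E i ⟨b, hbZ⟩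
        + ((‖b‖ - (2:ℝ) ^ (i - 1)) / (2:ℝ) ^ (i - 1)) • E (i + 1) ⟨b, hbZ'⟩) :
    ‖a‖ - ‖b‖ ≤ ‖φ a - φ b‖ ∧ ‖a - b‖ / 5 ≤ ‖φ a - φ b‖ := by
  set p : ℝ := (2:ℝ) ^ (i - 1) with hp
  have hppos : 0 < p := by positivity
  set u : Y := (((2:ℝ) ^ i - ‖a‖) / p) • E i ⟨a, haZ⟩
      - (((2:ℝ) ^ i - ‖b‖) / p) • E i ⟨b, hbZ⟩ with hu
  set v : Y := ((‖a‖ - p) / p) • E (i + 1) ⟨a, haZ'⟩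
      - ((‖b‖ - p) / p) • E (i + 1) ⟨b, hbZ'⟩ with hv
  have hdiff : φ a - φ b = u + v := by
    rw [hφa, hφb, hu, hv]; abel
  set y : ℤ → Y := fun j => if j = i then u else if j = i + 1 then v else 0 with hy
  have hne : i + 1 ≠ i := by omega
  have hmem : ∀ j, y j ∈ Ysub j := by
    intro j
    by_cases h1 : j = i
    · subst h1
      simp only [hy, if_pos rfl]
      exact sub_mem ((Ysub _).smul_mem _ (hErange _ _)) ((Ysub _).smul_mem _ (hErange _ _))
    · by_cases h2 : j = i + 1
      · subst h2
        simp only [hy, if_neg hne, if_pos rfl]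
        exact sub_mem ((Ysub _).smul_mem _ (hErange _ _)) ((Ysub _).smul_mem _ (hErange _ _))
      · simp only [hy, if_neg h1, if_neg h2]
        exact (Ysub j).zero_mem
  have hzero : ∀ j ∉ ({i, i + 1} : Finset ℤ), y j = 0 := by
    intro j hj
    simp only [Finset.mem_insert, Finset.mem_singleton, not_or] at hj
    simp only [hy, if_neg hj.1, if_neg hj.2]
  have hsum : Summable y := summable_of_ne_finset_zero hzero
  have htsum : ∑' j, y j = u + v := by
    rw [tsum_eq_sum hzero, Finset.sum_insert (Finset.notMem_singleton.mpr hne.symm),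
      Finset.sum_singleton]
    simp [hy, hne]
  have hkey := hmono y hmem hsum (i + 1)
  rw [htsum, ← hdiff] at hkey
  have hyv : y (i + 1) = v := by simp [hy, hne]
  rw [hyv] at hkey
  have hnv : (‖a‖ - p) / p * ‖a‖ - (‖b‖ - p) / p * ‖b‖ ≤ ‖v‖ := by
    have h1 : ‖((‖a‖ - p) / p) • E (i + 1) ⟨a, haZ'⟩‖ = (‖a‖ - p) / p * ‖a‖ := by
      rw [norm_smul, hEiso, Real.norm_of_nonneg (div_nonneg (by linarith) hppos.le)]
    have h2 : ‖((‖b‖ - p) / p) • E (i + 1) ⟨b, hbZ'⟩‖ = (‖b‖ - p) / p * ‖b‖ := by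
      rw [norm_smul, hEiso, Real.norm_of_nonneg (div_nonneg (by linarith) hppos.le)]
    calc (‖a‖ - p) / p * ‖a‖ - (‖b‖ - p) / p * ‖b‖
        = ‖((‖a‖ - p) / p) • E (i + 1) ⟨a, haZ'⟩‖
          - ‖((‖b‖ - p) / p) • E (i + 1) ⟨b, hbZ'⟩‖ := by rw [h1, h2]
      _ ≤ ‖v‖ := norm_sub_norm_le _ _
  have hab : ‖a‖ - ‖b‖ ≤ (‖a‖ - p) / p * ‖a‖ - (‖b‖ - p) / p * ‖b‖ := by
    rw [div_mul_eq_mul_div, div_mul_eq_mul_div, ← sub_div, le_div_iff₀ hppos]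
    nlinarith [sub_nonneg.mpr hba, sub_nonneg.mpr ha1, sub_nonneg.mpr hb1]
  have hmain : ‖a‖ - ‖b‖ ≤ ‖φ a - φ b‖ := le_trans hab (le_trans hnv hkey)
  exact ⟨hmain, le_trans hfar hmain⟩
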